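/- (Characterization of Infeasibility / Distance Duality) Let S = {v_1, ..., v_n} be a finite nonempty set of points in ℝ^m and p ∈ ℝ^m. Then p does not lie in conv(S) if and only if there exists a p-witness, i.e., a point p' ∈ conv(S) such that d(p', v_i) < d(p, v_i) for every i = 1, ..., n. -/

import Mathlib

open RealInnerProductSpace

/-- **Characterization of Infeasibility / Distance Duality**. `p ∉ conv(S)` iff there is a
`p`-witness: a point `p' ∈ conv(S)` with `d(p', v i) < d(p, v i)` for every `i`. -/
theorem characterization_of_infeasibility {m n : ℕ} (hn : 0 < n)
    (v : Fin n → EuclideanSpace ℝ (Fin m)) (p : EuclideanSpace ℝ (Fin m)) :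
    p ∉ convexHull ℝ (Set.range v) ↔
      ∃ p' ∈ convexHull ℝ (Set.range v), ∀ i : Fin n, dist p' (v i) < dist p (v i) := by
  set K := convexHull ℝ (Set.range v) with hKdef
  have hKconv : Convex ℝ K := convex_convexHull ℝ _
  constructor
  · intro hp
    have hfin : (Set.range v).Finite := Set.finite_range v
    have hKcompact : IsCompact K := hfin.isCompact_convexHull ℝ
    have hKcomplete : IsComplete K := hKcompact.isComplete
    have hKne : K.Nonempty :=
      ⟨v ⟨0, hn⟩, subset_convexHull ℝ _ (Set.mem_range_self _)⟩
    obtain ⟨p', hp'K, hproj⟩ :=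
      exists_norm_eq_iInf_of_complete_convex hKne hKcomplete hKconv p
    have hip : ∀ w ∈ K, ⟪p - p', w - p'⟫ ≤ 0 :=
      (norm_eq_iInf_iff_real_inner_le_zero hKconv hp'K).mp hproj
    refine ⟨p', hp'K, fun i => ?_⟩
    have hvK : v i ∈ K := subset_convexHull ℝ _ (Set.mem_range_self i)
    have h1 : ⟪p - p', v i - p'⟫ ≤ 0 := hip _ hvK
    have hpp' : 0 < ‖p - p'‖ := by
      rw [norm_pos_iff, sub_ne_zero]
      rintro rfl; exact hp hp'K
    have h2 : (0:ℝ) ≤ ⟪p - p', p' - v i⟫ := by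
      have h1' := h1
      rw [show v i - p' = -(p' - v i) by abel, inner_neg_right] at h1'
      linarith
    have key : ‖p' - v i‖ ^ 2 < ‖p - v i‖ ^ 2 := by
      have hsplit : p - v i = (p - p') + (p' - v i) := by abel
      rw [hsplit, norm_add_sq_real]
      nlinarith [pow_pos hpp' 2]
    rw [dist_eq_norm, dist_eq_norm]
    exact lt_of_pow_lt_pow_left₀ 2 (norm_nonneg _) key
  · rintro ⟨p', hp'K, hlt⟩ hp
    have hhalf : Set.range v ⊆ {x | 2 * ⟪p - p', x⟫ < ‖p‖ ^ 2 - ‖p'‖ ^ 2} := by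
      rintro _ ⟨i, rfl⟩
      have hi := hlt i
      rw [dist_eq_norm, dist_eq_norm] at hi
      have h2 : ‖p' - v i‖ ^ 2 < ‖p - v i‖ ^ 2 :=
        pow_lt_pow_left₀ hi (norm_nonneg _) two_ne_zero
      rw [norm_sub_sq_real, norm_sub_sq_real] at h2
      simp only [Set.mem_setOf_eq, inner_sub_left]
      linarith
    have hconv : Convex ℝ {x : EuclideanSpace ℝ (Fin m) |
        2 * ⟪p - p', x⟫ < ‖p‖ ^ 2 - ‖p'‖ ^ 2} := by
      have hlin : IsLinearMap ℝ (fun x : EuclideanSpace ℝ (Fin m) => 2 * ⟪p - p', x⟫) :=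
        ⟨fun x y => by rw [inner_add_right]; ring,
         fun c x => by simp only [real_inner_smul_right, smul_eq_mul]; ring⟩
      exact convex_halfSpace_lt hlin _
    have hpc : 2 * ⟪p - p', p⟫ < ‖p‖ ^ 2 - ‖p'‖ ^ 2 :=
      convexHull_min hhalf hconv hp
    have hns : ‖p - p'‖ ^ 2 < 0 := by
      rw [norm_sub_sq_real]
      rw [inner_sub_left, real_inner_self_eq_norm_sq] at hpc
      have hcomm : ⟪p, p'⟫ = ⟪p', p⟫ := real_inner_comm _ _
      linarith
    exact absurd hns (not_lt.mpr (sq_nonneg _))
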